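/- Suppose that for a fixed unit vector α = (α_x,α_y,α_z) ∈ ℝ³ the lifted electromagnetic field tensor 𝓕 (with entries T₁₂, T₁₃, T₂₃, S₁₂, S₁₃, S₂₃ as in the context) satisfies assumption (a3): (∂T₁₂/∂z − ∂S₁₂/∂T₃) − (∂T₁₃/∂y − ∂S₁₃/∂T₂) + (∂T₂₃/∂x − ∂S₂₃/∂T₁) = 0 at all points with T = tα, t > 0. Then the divergence Maxwell equation ∇·B = 0 holds: ∂B_x/∂x + ∂B_y/∂y + ∂B_z/∂z = 0 for all X ∈ ℝ³ and t > 0. -/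

import Mathlib

open EuclideanSpace

lemma hasFDerivAt_norm_at (α : EuclideanSpace ℝ (Fin 3)) (hα : ‖α‖ = 1) {t : ℝ} (ht : 0 < t) :
    HasFDerivAt (fun y : EuclideanSpace ℝ (Fin 3) => ‖y‖) (innerSL ℝ α) (t • α) := by
  set x : EuclideanSpace ℝ (Fin 3) := t • α with hxdef
  have hxn : ‖x‖ = t := by rw [hxdef, norm_smul, hα, Real.norm_eq_abs, abs_of_pos ht, mul_one]
  have hx0 : ‖x‖ ^ 2 ≠ 0 := by rw [hxn]; positivity
  have h1 : HasFDerivAt (fun y : EuclideanSpace ℝ (Fin 3) => ‖y‖ ^ 2)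
      (2 • innerSL ℝ x) x := by
    simpa using (hasFDerivAt_id x).norm_sq
  have h2 : HasDerivAt Real.sqrt (1 / (2 * Real.sqrt (‖x‖ ^ 2))) (‖x‖ ^ 2) :=
    Real.hasDerivAt_sqrt hx0
  have h3 := h2.comp_hasFDerivAt x h1
  have hfun : (Real.sqrt ∘ fun y : EuclideanSpace ℝ (Fin 3) => ‖y‖ ^ 2)
      = fun y : EuclideanSpace ℝ (Fin 3) => ‖y‖ := by
    funext y; simp [Real.sqrt_sq (norm_nonneg y)]
  rw [hfun] at h3
  refine h3.congr_fderiv ?_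
  refine ContinuousLinearMap.ext fun v => ?_
  rw [Real.sqrt_sq (norm_nonneg x), hxn]
  simp [hxdef, inner_smul_left]
  field_simp



set_option maxHeartbeats 1000000 in


open EuclideanSpace in
/-- If the lifted electromagnetic field tensor, with entries T₁₂ = B_z, T₁₃ = −B_y,
T₂₃ = B_x, S₁₂ = α_x E_y − α_y E_x, S₁₃ = α_x E_z − α_z E_x, S₂₃ = α_y E_z − α_z E_y
(lifted via t = |T|), satisfies assumption (a3):
(∂T₁₂/∂z − ∂S₁₂/∂t_z) − (∂T₁₃/∂y − ∂S₁₃/∂t_y) + (∂T₂₃/∂x − ∂S₂₃/∂t_x) = 0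
at all points with T = tα, t > 0, then the divergence Maxwell equation ∇·B = 0
holds for all X and t > 0. -/
theorem div_B_eq_zero
    (α : EuclideanSpace ℝ (Fin 3)) (hα : ‖α‖ = 1)
    (E B : Fin 3 → EuclideanSpace ℝ (Fin 3) × ℝ → ℝ)
    (hE : ∀ i, ContDiff ℝ 1 (E i)) (hB : ∀ i, ContDiff ℝ 1 (B i))
    (T12 T13 T23 S12 S13 S23 : EuclideanSpace ℝ (Fin 3) × EuclideanSpace ℝ (Fin 3) → ℝ)
    (hT12 : ∀ p, T12 p = B 2 (p.1, ‖p.2‖))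
    (hT13 : ∀ p, T13 p = -B 1 (p.1, ‖p.2‖))
    (hT23 : ∀ p, T23 p = B 0 (p.1, ‖p.2‖))
    (hS12 : ∀ p, S12 p = α 0 * E 1 (p.1, ‖p.2‖) - α 1 * E 0 (p.1, ‖p.2‖))
    (hS13 : ∀ p, S13 p = α 0 * E 2 (p.1, ‖p.2‖) - α 2 * E 0 (p.1, ‖p.2‖))
    (hS23 : ∀ p, S23 p = α 1 * E 2 (p.1, ‖p.2‖) - α 2 * E 1 (p.1, ‖p.2‖))
    (a3 : ∀ (X : EuclideanSpace ℝ (Fin 3)) (t : ℝ), 0 < t →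
      (fderiv ℝ T12 (X, t • α) (single 2 1, 0) - fderiv ℝ S12 (X, t • α) (0, single 2 1)) -
      (fderiv ℝ T13 (X, t • α) (single 1 1, 0) - fderiv ℝ S13 (X, t • α) (0, single 1 1)) +
      (fderiv ℝ T23 (X, t • α) (single 0 1, 0) - fderiv ℝ S23 (X, t • α) (0, single 0 1))
        = 0) :
    ∀ (X : EuclideanSpace ℝ (Fin 3)) (t : ℝ), 0 < t →
      fderiv ℝ (B 0) (X, t) (single 0 1, 0) + fderiv ℝ (B 1) (X, t) (single 1 1, 0) +
        fderiv ℝ (B 2) (X, t) (single 2 1, 0) = 0 := by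
  intro X t ht
  set G : (EuclideanSpace ℝ (Fin 3) × EuclideanSpace ℝ (Fin 3)) →L[ℝ]
      (EuclideanSpace ℝ (Fin 3) × ℝ) :=
    (ContinuousLinearMap.fst ℝ (EuclideanSpace ℝ (Fin 3)) (EuclideanSpace ℝ (Fin 3))).prod
      ((innerSL ℝ α).comp (ContinuousLinearMap.snd ℝ (EuclideanSpace ℝ (Fin 3)) (EuclideanSpace ℝ (Fin 3)))) with hGdef
  have htn : ‖t • α‖ = t := by rw [norm_smul, hα, Real.norm_eq_abs, abs_of_pos ht, mul_one]
  have hg : HasFDerivAt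
      (fun p : EuclideanSpace ℝ (Fin 3) × EuclideanSpace ℝ (Fin 3) => (p.1, ‖p.2‖))
      G (X, t • α) :=
    (hasFDerivAt_fst).prodMk ((hasFDerivAt_norm_at α hα ht).comp (X, t • α) (hasFDerivAt_snd))
  have hgval : (((X, t • α) : _ × EuclideanSpace ℝ (Fin 3)).1, ‖((X, t • α) :
      _ × EuclideanSpace ℝ (Fin 3)).2‖) = (X, t) := by simp [htn]
  have hBd : ∀ i, HasFDerivAt (B i) (fderiv ℝ (B i) (X, t)) (X, t) := fun i =>
    (((hB i).differentiable one_ne_zero) (X, t)).hasFDerivAt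
  have hEd : ∀ i, HasFDerivAt (E i) (fderiv ℝ (E i) (X, t)) (X, t) := fun i =>
    (((hE i).differentiable one_ne_zero) (X, t)).hasFDerivAt
  have hGx : ∀ i : Fin 3, G ((single i 1 : EuclideanSpace ℝ (Fin 3)),
      (0 : EuclideanSpace ℝ (Fin 3))) = ((single i 1 : EuclideanSpace ℝ (Fin 3)), (0 : ℝ)) := by
    intro i; simp [hGdef]
  have hGt : ∀ i : Fin 3, G ((0 : EuclideanSpace ℝ (Fin 3)),
      (single i 1 : EuclideanSpace ℝ (Fin 3))) = ((0 : EuclideanSpace ℝ (Fin 3)), α i) := by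
    intro i
    simp only [hGdef, ContinuousLinearMap.prod_apply, ContinuousLinearMap.comp_apply,
      ContinuousLinearMap.coe_fst', ContinuousLinearMap.coe_snd', innerSL_apply_apply]
    rw [real_inner_comm]
    simp [EuclideanSpace.inner_single_left]
  have hEev : ∀ i j : Fin 3, fderiv ℝ (E i) (X, t) ((0 : EuclideanSpace ℝ (Fin 3)), α j)
      = α j * fderiv ℝ (E i) (X, t) ((0 : EuclideanSpace ℝ (Fin 3)), (1 : ℝ)) := by
    intro i j
    have h : ((0 : EuclideanSpace ℝ (Fin 3)), α j)
        = α j • ((0 : EuclideanSpace ℝ (Fin 3)), (1 : ℝ)) := by simp [Prod.smul_def]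
    rw [h, map_smul]; rfl
  have hBcomp : ∀ i : Fin 3, HasFDerivAt
      (fun p : EuclideanSpace ℝ (Fin 3) × EuclideanSpace ℝ (Fin 3) => B i (p.1, ‖p.2‖))
      ((fderiv ℝ (B i) (X, t)).comp G) (X, t • α) := by
    intro i
    have hb : HasFDerivAt (B i) (fderiv ℝ (B i) (X, t))
        (((X, t • α) : _ × EuclideanSpace ℝ (Fin 3)).1,
          ‖((X, t • α) : _ × EuclideanSpace ℝ (Fin 3)).2‖) := by
      rw [hgval]; exact hBd i
    exact hb.comp (X, t • α) hg
  have hEcomp : ∀ i : Fin 3, HasFDerivAt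
      (fun p : EuclideanSpace ℝ (Fin 3) × EuclideanSpace ℝ (Fin 3) => E i (p.1, ‖p.2‖))
      ((fderiv ℝ (E i) (X, t)).comp G) (X, t • α) := by
    intro i
    have he : HasFDerivAt (E i) (fderiv ℝ (E i) (X, t))
        (((X, t • α) : _ × EuclideanSpace ℝ (Fin 3)).1,
          ‖((X, t • α) : _ × EuclideanSpace ℝ (Fin 3)).2‖) := by
      rw [hgval]; exact hEd i
    exact he.comp (X, t • α) hg
  have hdT12 : fderiv ℝ T12 (X, t • α) (single 2 1, 0)
      = fderiv ℝ (B 2) (X, t) ((single 2 1 : EuclideanSpace ℝ (Fin 3)), (0 : ℝ)) := by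
    rw [funext hT12, (hBcomp 2).fderiv]
    rw [ContinuousLinearMap.comp_apply, hGx 2]
  have hdT13 : fderiv ℝ T13 (X, t • α) (single 1 1, 0)
      = -fderiv ℝ (B 1) (X, t) ((single 1 1 : EuclideanSpace ℝ (Fin 3)), (0 : ℝ)) := by
    rw [funext hT13, HasFDerivAt.fderiv (f := fun x : EuclideanSpace ℝ (Fin 3) × EuclideanSpace ℝ (Fin 3) => -B 1 (x.1, ‖x.2‖)) ((hBcomp 1).neg)]
    rw [ContinuousLinearMap.neg_apply, ContinuousLinearMap.comp_apply, hGx 1]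
  have hdT23 : fderiv ℝ T23 (X, t • α) (single 0 1, 0)
      = fderiv ℝ (B 0) (X, t) ((single 0 1 : EuclideanSpace ℝ (Fin 3)), (0 : ℝ)) := by
    rw [funext hT23, (hBcomp 0).fderiv]
    rw [ContinuousLinearMap.comp_apply, hGx 0]
  have hdS : ∀ (S : EuclideanSpace ℝ (Fin 3) × EuclideanSpace ℝ (Fin 3) → ℝ)
      (i j : Fin 3) (c d : ℝ) (k : Fin 3),
      S = (fun p : EuclideanSpace ℝ (Fin 3) × EuclideanSpace ℝ (Fin 3) =>
        c * E i (p.1, ‖p.2‖) - d * E j (p.1, ‖p.2‖)) →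
      fderiv ℝ S (X, t • α) ((0 : EuclideanSpace ℝ (Fin 3)),
          (single k 1 : EuclideanSpace ℝ (Fin 3)))
        = α k * (c * fderiv ℝ (E i) (X, t) ((0 : EuclideanSpace ℝ (Fin 3)), (1 : ℝ))
            - d * fderiv ℝ (E j) (X, t) ((0 : EuclideanSpace ℝ (Fin 3)), (1 : ℝ))) := by
    intro S i j c d k hSf
    have hd : HasFDerivAt S (c • ((fderiv ℝ (E i) (X, t)).comp G)
        - d • ((fderiv ℝ (E j) (X, t)).comp G)) (X, t • α) := by
      rw [hSf]
      exact (((hEcomp i).const_mul c).sub ((hEcomp j).const_mul d))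
    rw [hd.fderiv]
    rw [ContinuousLinearMap.sub_apply, ContinuousLinearMap.smul_apply,
      ContinuousLinearMap.smul_apply, ContinuousLinearMap.comp_apply,
      ContinuousLinearMap.comp_apply, hGt k, hEev i k, hEev j k]
    simp only [smul_eq_mul]
    ring
  have hdS12 := hdS S12 1 0 (α 0) (α 1) 2 (funext hS12)
  have hdS13 := hdS S13 2 0 (α 0) (α 2) 1 (funext hS13)
  have hdS23 := hdS S23 2 1 (α 1) (α 2) 0 (funext hS23)
  have ha3 := a3 X t ht
  rw [hdT12, hdT13, hdT23, hdS12, hdS13, hdS23] at ha3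
  nlinarith [ha3]
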